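/- Let 𝔄 be a finite-dimensional unital associative algebra over ℂ whose index equals 1, where ind 𝔄 := min over all linear functionals G ∈ 𝔄* of dim Stab_G(1). Then 𝔄 is of type 1: there exist a linear functional F ∈ 𝔄* and λ, μ ∈ ℂ such that the bilinear form (x, y) ↦ λ F(x y) + μ F(y x) on 𝔄 is non-degenerate. -/

import Mathlib

/-- `Stab_F(1) = {a : ∀ x, F(ax) = F(xa)}` -/
def stabOne {A : Type*} [NonUnitalRing A] [Module ℂ A]
    [SMulCommClass ℂ A A] [IsScalarTower ℂ A A]
    (F : Module.Dual ℂ A) : Submodule ℂ A where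
  carrier := {a | ∀ x : A, F (a * x) = F (x * a)}
  add_mem' := by
    intro a b ha hb x
    simp only [add_mul, mul_add, map_add, ha x, hb x]
  zero_mem' := by intro x; simp
  smul_mem' := by
    intro c a ha x
    simp only [smul_mul_assoc, mul_smul_comm, map_smul, ha x]

section Aux

open Polynomial Module LinearMap

variable {A : Type*} [Ring A] [Algebra ℂ A]

noncomputable def Lm (F : Module.Dual ℂ A) : A →ₗ[ℂ] Module.Dual ℂ A where
  toFun v := F ∘ₗ LinearMap.mulLeft ℂ v
  map_add' a b := by ext x; simp [add_mul]
  map_smul' c a := by ext x; simp [smul_mul_assoc]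

noncomputable def Rm (F : Module.Dual ℂ A) : A →ₗ[ℂ] Module.Dual ℂ A where
  toFun v := F ∘ₗ LinearMap.mulRight ℂ v
  map_add' a b := by ext x; simp [mul_add]
  map_smul' c a := by ext x; simp [mul_smul_comm]

@[simp] lemma Lm_apply (F : Module.Dual ℂ A) (v x : A) : Lm F v x = F (v * x) := rfl
@[simp] lemma Rm_apply (F : Module.Dual ℂ A) (v x : A) : Rm F v x = F (x * v) := rfl

lemma descent (F : Module.Dual ℂ A) (a : ℕ → A) (h0 : Lm F (a 0) = 0)
    (hsucc : ∀ j, Lm F (a (j + 1)) = Rm F (a j)) :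
    ∀ i j, F (a i * a j) = 0 := by
  have key : ∀ k i j, i + j ≤ k → F (a i * a j) = 0 := by
    intro k
    induction k with
    | zero =>
      intro i j hij
      obtain ⟨rfl, rfl⟩ : i = 0 ∧ j = 0 := by omega
      have := congrFun (congrArg DFunLike.coe h0) (a 0)
      simpa using this
    | succ k ih =>
      intro i j hij
      match i with
      | 0 =>
        have := congrFun (congrArg DFunLike.coe h0) (a j)
        simpa using this
      | (i' + 1) =>
        have h := congrFun (congrArg DFunLike.coe (hsucc i')) (a j)
        simp only [Lm_apply, Rm_apply] at h
        rw [h]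
        exact ih j i' (by omega)
  exact fun i j => key (i + j) i j le_rfl

lemma main2 [FiniteDimensional ℂ A]
    (F : Module.Dual ℂ A)
    (hker : ∀ v : A, Lm F v = Rm F v → v ∈ Submodule.span ℂ {(1 : A)})
    (hF1 : F 1 ≠ 0) :
    ∃ t : ℂ, ∀ v : A, Lm F v = t • Rm F v → v = 0 := by
  classical
  set n := Module.finrank ℂ A with hn
  let b : Basis (Fin n) ℂ A := Module.finBasis ℂ A
  let b' : Basis (Fin n) ℂ (Module.Dual ℂ A) := b.dualBasis
  set ML : Matrix (Fin n) (Fin n) ℂ := LinearMap.toMatrix b b' (Lm F) with hML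
  set MR : Matrix (Fin n) (Fin n) ℂ := LinearMap.toMatrix b b' (Rm F) with hMR
  set P : Matrix (Fin n) (Fin n) ℂ[X] :=
    ML.map Polynomial.C - (Polynomial.X : ℂ[X]) • MR.map Polynomial.C with hP
  have hPik : ∀ i k, P i k = C (ML i k) - X * C (MR i k) := by
    intro i k
    simp [hP, Matrix.sub_apply, Matrix.smul_apply, Matrix.map_apply, smul_eq_mul]
  by_cases hdet : P.det = 0
  · -- hard case: derive False
    exfalso
    obtain ⟨w, hw0, hwP⟩ := Matrix.exists_mulVec_eq_zero_iff.mpr hdet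
    obtain ⟨i1, hi1⟩ := Function.ne_iff.mp hw0
    set S : Finset (Fin n) := Finset.univ.filter (fun i => w i ≠ 0) with hS
    have hi1' : w i1 ≠ 0 := by simpa using hi1
    have hSne : S.Nonempty := ⟨i1, by simp [hS, hi1']⟩
    set m : ℕ := S.inf' hSne (fun i => (w i).rootMultiplicity 1) with hm
    have hdvd : ∀ i, (X - C 1) ^ m ∣ w i := by
      intro i
      by_cases h : w i = 0
      · simp [h]
      · exact dvd_trans (pow_dvd_pow _ (Finset.inf'_le _ (by simp [hS, h])))
          (Polynomial.pow_rootMultiplicity_dvd (w i) 1)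
    choose u hu using hdvd
    have hXm : ((X - C 1 : ℂ[X]) ^ m) ≠ 0 := pow_ne_zero _ (Polynomial.X_sub_C_ne_zero 1)
    have hPu : P.mulVec u = 0 := by
      funext i
      have h : P.mulVec w i = 0 := by rw [hwP]; rfl
      have h2 : ((X - C 1 : ℂ[X]) ^ m) * (P.mulVec u i) = 0 := by
        rw [← h]
        simp only [Matrix.mulVec, dotProduct]
        rw [Finset.mul_sum]
        refine (Finset.sum_congr rfl fun j _ => ?_).symm
        rw [hu j]; ring
      rcases mul_eq_zero.mp h2 with h' | h'
      · exact absurd h' hXm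
      · simpa using h'
    obtain ⟨i0, hi0S, hi0⟩ := Finset.exists_mem_eq_inf' hSne (fun i => (w i).rootMultiplicity 1)
    have hwi0 : w i0 ≠ 0 := by simpa [hS] using hi0S
    have hueval : (u i0).eval 1 ≠ 0 := by
      intro heval
      have hdvd1 : (X - C 1) ∣ u i0 := Polynomial.dvd_iff_isRoot.mpr heval
      have hdv : (X - C 1) ^ (m + 1) ∣ w i0 := by
        rw [hu i0, pow_succ]
        exact mul_dvd_mul_left _ hdvd1
      have hle := (Polynomial.le_rootMultiplicity_iff hwi0).mpr hdv
      omega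
    -- the chain in A
    set c : ℕ → Fin n → ℂ := fun j i => (u i).coeff j with hc
    set a : ℕ → A := fun j => b.equivFun.symm (c j) with ha
    have hrepr : ∀ j, ⇑(b.repr (a j)) = c j := by
      intro j
      have h : b.equivFun (a j) = c j := b.equivFun.apply_symm_apply (c j)
      rw [← h]; rfl
    have hterm : ∀ i k (j : ℕ), ((P i k) * u k).coeff j
        = ML i k * (u k).coeff j - (if j = 0 then 0 else MR i k * (u k).coeff (j-1)) := by
      intro i k j
      rw [hPik i k, sub_mul, Polynomial.coeff_sub, Polynomial.coeff_C_mul, mul_assoc]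
      congr 1
      match j with
      | 0 => simp [Polynomial.mul_coeff_zero]
      | (j' + 1) => rw [Polynomial.coeff_X_mul]; simp [Polynomial.coeff_C_mul]
    have hrow : ∀ i j, (∑ k, ((P i k) * u k).coeff j) = 0 := by
      intro i j
      have h : P.mulVec u i = 0 := by rw [hPu]; rfl
      have := congrArg (fun p => Polynomial.coeff p j) h
      simpa [Matrix.mulVec, dotProduct, Polynomial.finset_sum_coeff] using this
    have hcoeff0 : ML.mulVec (c 0) = 0 := by
      funext i
      have := hrow i 0
      rw [Finset.sum_congr rfl (fun k _ => hterm i k 0)] at this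
      simpa [Matrix.mulVec, dotProduct] using this
    have hcoeffS : ∀ j, ML.mulVec (c (j+1)) = MR.mulVec (c j) := by
      intro j
      funext i
      have := hrow i (j+1)
      rw [Finset.sum_congr rfl (fun k _ => hterm i k (j+1))] at this
      rw [Finset.sum_sub_distrib] at this
      simp only [Nat.succ_ne_zero, if_false, Nat.add_sub_cancel] at this
      simp only [Matrix.mulVec, dotProduct]
      exact sub_eq_zero.mp this
    -- translate to linear map relations
    have hmat : ∀ (j : ℕ), ⇑(b'.repr (Lm F (a j))) = ML.mulVec (c j) := by
      intro j
      rw [← LinearMap.toMatrix_mulVec_repr b b' (Lm F) (a j), hrepr j, hML]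
    have hmatR : ∀ (j : ℕ), ⇑(b'.repr (Rm F (a j))) = MR.mulVec (c j) := by
      intro j
      rw [← LinearMap.toMatrix_mulVec_repr b b' (Rm F) (a j), hrepr j, hMR]
    have hL0 : Lm F (a 0) = 0 := by
      have h : ⇑(b'.repr (Lm F (a 0))) = ⇑(b'.repr (0 : Module.Dual ℂ A)) := by
        rw [hmat 0, hcoeff0]; simp
      have := DFunLike.coe_injective h
      exact b'.repr.injective this
    have hLS : ∀ j, Lm F (a (j+1)) = Rm F (a j) := by
      intro j
      have h : ⇑(b'.repr (Lm F (a (j+1)))) = ⇑(b'.repr (Rm F (a j))) := by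
        rw [hmat (j+1), hmatR j, hcoeffS j]
      exact b'.repr.injective (DFunLike.coe_injective h)
    -- the element s
    set N : ℕ := Finset.univ.sup (fun i => (u i).natDegree) with hN
    set s : A := ∑ j ∈ Finset.range (N + 2), a j with hs
    have haN1 : a (N + 1) = 0 := by
      have : c (N + 1) = 0 := by
        funext i
        refine Polynomial.coeff_eq_zero_of_natDegree_lt ?_
        have hle : (u i).natDegree ≤ N := Finset.le_sup (f := fun i => (u i).natDegree)
          (Finset.mem_univ i)
        omega
      rw [ha]; simp only [this]; simp
    have hsLR : Lm F s = Rm F s := by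
      rw [hs, map_sum, map_sum, Finset.sum_range_succ' (fun j => Lm F (a j)) (N+1),
        Finset.sum_range_succ (fun j => Rm F (a j)) (N+1), hL0, add_zero, haN1, map_zero,
        add_zero]
      exact Finset.sum_congr rfl fun j _ => hLS j
    obtain ⟨sig, hsig⟩ := Submodule.mem_span_singleton.mp (hker s hsLR)
    have hs0 : s ≠ 0 := by
      have hval : (b.repr s) i0 = (u i0).eval 1 := by
        rw [hs, map_sum, Finset.sum_apply']
        have hstep : ∀ j ∈ Finset.range (N+2), (b.repr (a j)) i0 = (u i0).coeff j := by
          intro j _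
          exact congrFun (hrepr j) i0
        rw [Finset.sum_congr rfl hstep]
        have hdeg : (u i0).natDegree < N + 2 := by
          have hle : (u i0).natDegree ≤ N := Finset.le_sup (f := fun i => (u i).natDegree)
            (Finset.mem_univ i0)
          omega
        rw [Polynomial.eval_eq_sum_range' hdeg]
        simp
      intro h0
      rw [h0] at hval
      simp at hval
      exact hueval hval.symm
    have hsig0 : sig ≠ 0 := by
      intro h
      rw [h, zero_smul] at hsig
      exact hs0 hsig.symm
    have hzero : F (s * s) = 0 := by
      rw [hs, Finset.sum_mul_sum, map_sum]
      refine Finset.sum_eq_zero fun i _ => ?_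
      rw [map_sum]
      exact Finset.sum_eq_zero fun j _ => descent F a hL0 hLS i j
    have hval2 : F (s * s) = sig * sig * F 1 := by
      rw [← hsig]
      have : (sig • (1:A)) * (sig • (1:A)) = (sig * sig) • (1:A) := by
        rw [smul_mul_assoc, mul_smul_comm, one_mul, smul_smul]
      rw [this, map_smul, smul_eq_mul]
    rw [hzero] at hval2
    exact (mul_ne_zero (mul_ne_zero hsig0 hsig0) hF1) hval2.symm
  · -- easy case
    obtain ⟨t, ht⟩ : ∃ t : ℂ, P.det.eval t ≠ 0 := by
      by_contra h
      push_neg at h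
      exact hdet (Polynomial.zero_of_eval_zero _ h)
    refine ⟨t, fun v hv => ?_⟩
    have hMt : (P.map (Polynomial.evalRingHom t)) = ML - t • MR := by
      funext i j
      simp only [Matrix.map_apply, hPik i j, Polynomial.coe_evalRingHom, Polynomial.eval_sub,
        Polynomial.eval_mul, Polynomial.eval_C, Polynomial.eval_X, Matrix.sub_apply,
        Matrix.smul_apply, smul_eq_mul]
    have hdm : (P.map (Polynomial.evalRingHom t)).det = Polynomial.eval t P.det := by
      rw [← RingHom.mapMatrix_apply, ← RingHom.map_det]; rfl
    have hdet2 : (ML - t • MR).det ≠ 0 := by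
      rw [← hMt, hdm]; exact ht
    have hsub : (Lm F - t • Rm F) v = 0 := by
      simp [LinearMap.sub_apply, LinearMap.smul_apply, hv]
    have hmat : (ML - t • MR).mulVec (⇑(b.repr v)) = 0 := by
      have heq : ML - t • MR = LinearMap.toMatrix b b' (Lm F - t • Rm F) := by
        rw [hML, hMR, map_sub, map_smul]
      rw [heq, LinearMap.toMatrix_mulVec_repr, hsub]
      simp
    by_contra hv0
    have hrepr0 : ⇑(b.repr v) ≠ 0 := by
      intro h
      apply hv0
      have h2 : b.repr v = 0 := DFunLike.coe_injective (by simpa using h)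
      simpa using congrArg b.repr.symm h2
    exact hdet2 (Matrix.exists_mulVec_eq_zero_iff.mp ⟨_, hrepr0, hmat⟩)

lemma gener [FiniteDimensional ℂ A] [Nontrivial A] (G : Module.Dual ℂ A)
    (hG : ∀ v : A, Lm G v = Rm G v → v ∈ Submodule.span ℂ {(1 : A)}) :
    ∃ F : Module.Dual ℂ A,
      (∀ v : A, Lm F v = Rm F v → v ∈ Submodule.span ℂ {(1 : A)}) ∧ F 1 ≠ 0 := by
  classical
  set b : Basis (Fin (Module.finrank ℂ A)) ℂ A := Module.finBasis ℂ A with hb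
  obtain ⟨j, hj⟩ : ∃ j, b.repr 1 j ≠ 0 := by
    by_contra h
    push_neg at h
    have h2 : b.repr 1 = 0 := Finsupp.ext h
    have : (1 : A) = 0 := by simpa using congrArg b.repr.symm h2
    exact one_ne_zero this
  set H : Module.Dual ℂ A := (b.repr 1 j)⁻¹ • b.coord j with hH
  have hH1 : H 1 = 1 := by
    simp [hH, Basis.coord_apply, inv_mul_cancel₀ hj]
  set D : A →ₗ[ℂ] Module.Dual ℂ A := Lm G - Rm G with hD
  set E : A →ₗ[ℂ] Module.Dual ℂ A := Lm H - Rm H with hE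
  obtain ⟨W, hW⟩ := Submodule.exists_isCompl (Submodule.span ℂ {(1 : A)})
  set DW : W →ₗ[ℂ] Module.Dual ℂ A := D ∘ₗ W.subtype with hDW
  have hDWker : LinearMap.ker DW = ⊥ := by
    rw [LinearMap.ker_eq_bot']
    intro w hw
    have hmem : (w : A) ∈ Submodule.span ℂ {(1 : A)} := by
      apply hG
      have : D (w : A) = 0 := hw
      rw [hD] at this
      simpa [sub_eq_zero] using this
    have : (w : A) = 0 := Submodule.disjoint_def.mp hW.disjoint _ hmem w.2
    exact Subtype.ext this
  obtain ⟨S0, hS0⟩ := DW.exists_leftInverse_of_injective hDWker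
  set B1 : Module.End ℂ W := S0 ∘ₗ (E ∘ₗ W.subtype) with hB1
  have hp : minpoly ℂ B1 ≠ 0 := minpoly.ne_zero_of_finite ℂ B1
  set badC : Set ℂ :=
    ((fun μ : ℂ => -μ⁻¹) '' {x : ℂ | (minpoly ℂ B1).IsRoot x}) ∪ {-(G 1)} with hbadC
  have hfin : badC.Finite :=
    ((Polynomial.finite_setOf_isRoot hp).image _).union (Set.finite_singleton _)
  obtain ⟨c, hc⟩ := hfin.infinite_compl.nonempty
  rw [Set.mem_compl_iff, hbadC, Set.mem_union] at hc
  push_neg at hc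
  obtain ⟨hc1, hc2⟩ := hc
  refine ⟨G + c • H, ?_, ?_⟩
  · intro v hv
    have hDE : Lm (G + c • H) - Rm (G + c • H) = D + c • E := by
      ext y x
      simp only [LinearMap.sub_apply, LinearMap.add_apply, LinearMap.smul_apply,
        Lm_apply, Rm_apply, hD, hE, smul_eq_mul]
      ring
    have hDEv : (D + c • E) v = 0 := by
      rw [← hDE]
      simp [LinearMap.sub_apply, hv]
    have hvtop : v ∈ Submodule.span ℂ {(1 : A)} ⊔ W := by
      rw [hW.sup_eq_top]; trivial
    obtain ⟨y, hy, z, hz, hyz⟩ := Submodule.mem_sup.mp hvtop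
    have hD1 : D (1 : A) = 0 := by
      ext x; simp [hD]
    have hE1 : E (1 : A) = 0 := by
      ext x; simp [hE]
    have hDEy : (D + c • E) y = 0 := by
      obtain ⟨σ, rfl⟩ := Submodule.mem_span_singleton.mp hy
      rw [map_smul]
      simp [LinearMap.add_apply, LinearMap.smul_apply, hD1, hE1]
    have hDEz : (D + c • E) z = 0 := by
      have := hDEv
      rw [← hyz, map_add, hDEy, zero_add] at this
      exact this
    set zz : W := ⟨z, hz⟩ with hzz
    have hSDz : S0 (D z) = zz := by
      have := LinearMap.ext_iff.mp hS0 zz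
      simpa [hDW] using this
    have key : zz + c • B1 zz = 0 := by
      have h1 : S0 ((D + c • E) z) = 0 := by rw [hDEz]; simp
      rw [LinearMap.add_apply, LinearMap.smul_apply, map_add, map_smul, hSDz] at h1
      exact h1
    have hz0 : zz = 0 := by
      by_contra hzne
      have hc0 : c ≠ 0 := by
        rintro rfl
        simp only [zero_smul, add_zero] at key
        exact hzne key
      have hcB : c • B1 zz = -zz := by
        have := key
        rw [add_comm] at this
        exact eq_neg_of_add_eq_zero_left this
      have heig : B1 zz = (-c⁻¹) • zz := by
        calc B1 zz = c⁻¹ • (c • B1 zz) := by rw [smul_smul, inv_mul_cancel₀ hc0, one_smul]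
        _ = c⁻¹ • (-zz) := by rw [hcB]
        _ = (-c⁻¹) • zz := by rw [smul_neg]; exact (neg_smul _ _).symm
      have hev : Module.End.HasEigenvalue B1 (-c⁻¹) :=
        Module.End.hasEigenvalue_of_hasEigenvector
          ⟨Module.End.mem_eigenspace_iff.mpr heig, hzne⟩
      have hroot := Module.End.isRoot_of_hasEigenvalue hev
      apply hc1
      refine ⟨-c⁻¹, hroot, ?_⟩
      simp [inv_neg]
    have : v = y := by
      rw [← hyz]
      have : z = 0 := congrArg Subtype.val hz0
      rw [this, add_zero]
    rw [this]
    exact hy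
  · intro h
    apply hc2
    have : G 1 + c = 0 := by
      simpa [hH1, smul_eq_mul] using h
    have : c = -(G 1) := by linear_combination this
    exact this


end Aux

/-- Let `𝔄` be a finite-dimensional unital associative algebra over `ℂ`
with `ind 𝔄 = 1`, where `ind 𝔄` is the minimum of `dim Stab_G(1)` over all `G ∈ 𝔄*`.
Then `𝔄` is of type 1: there are `F ∈ 𝔄*` and `λ, μ ∈ ℂ` such that the bilinear form
`(x, y) ↦ λ F(x y) + μ F(y x)` on `𝔄` is non-degenerate. -/
theorem stmt14 {A : Type*} [Ring A] [Algebra ℂ A] [FiniteDimensional ℂ A]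
    (hind : IsLeast (Set.range fun G : Module.Dual ℂ A =>
      Module.finrank ℂ ↥(stabOne G)) 1) :
    ∃ (F : Module.Dual ℂ A) (l m : ℂ),
      ∀ v : A, (∀ w : A, l * F (v * w) + m * F (w * v) = 0) → v = 0 := by
  rcases subsingleton_or_nontrivial A with hs | hnt
  · exact ⟨0, 0, 0, fun v _ => Subsingleton.elim v 0⟩
  obtain ⟨G, hGr⟩ := hind.1
  simp only at hGr
  have hstab : stabOne G = Submodule.span ℂ {(1 : A)} := by
    have hle : Submodule.span ℂ {(1 : A)} ≤ stabOne G := by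
      rw [Submodule.span_le, Set.singleton_subset_iff]
      show ∀ x : A, G (1 * x) = G (x * 1)
      intro x
      rw [one_mul, mul_one]
    have h1 : Module.finrank ℂ (Submodule.span ℂ {(1 : A)}) = 1 :=
      finrank_span_singleton one_ne_zero
    exact (Submodule.eq_of_le_of_finrank_le hle (by rw [hGr, h1])).symm
  have hG : ∀ v : A, Lm G v = Rm G v → v ∈ Submodule.span ℂ {(1 : A)} := by
    intro v hv
    rw [← hstab]
    show ∀ x : A, G (v * x) = G (x * v)
    intro x
    have := congrFun (congrArg DFunLike.coe hv) x
    simpa using this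
  obtain ⟨F, hFk, hF1⟩ := gener G hG
  obtain ⟨t, ht⟩ := main2 F hFk hF1
  refine ⟨F, 1, -t, fun v hv => ?_⟩
  apply ht
  ext x
  have h := hv x
  simp only [Lm_apply, Rm_apply, LinearMap.smul_apply, smul_eq_mul]
  linear_combination h
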